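/- For every simple graph G, the total chromatic number of G equals the chromatic number of the square of the 2-nd subdivision of G, i.e., χ''(G) = χ(G^{2/2}). -/

import Mathlib

open SimpleGraph

/-- Data for an inner vertex of the `n`-th subdivision: it lies on the subdivided
edge `u w` at distance `i` from `u` (so `1 ≤ i ≤ n-1`). -/
structure SubdivPre {V : Type} (G : SimpleGraph V) (n : ℕ) where
  u : V
  w : V
  i : ℕ
  adj : G.Adj u w
  hi1 : 1 ≤ i
  hi2 : i ≤ n - 1

/-- `(u,w,i)` and `(w,u,n-i)` describe the same inner vertex. -/
def SubdivRel {V : Type} (G : SimpleGraph V) (n : ℕ) (p q : SubdivPre G n) : Prop :=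
  p.u = q.w ∧ p.w = q.u ∧ p.i + q.i = n

/-- The inner vertices of the `n`-th subdivision of `G`. -/
def SubdivInner {V : Type} (G : SimpleGraph V) (n : ℕ) : Type := Quot (SubdivRel G n)

/-- Vertices of the `n`-th subdivision: branch vertices plus inner vertices. -/
def SubdivV {V : Type} (G : SimpleGraph V) (n : ℕ) : Type := V ⊕ SubdivInner G n

def subdivAdj {V : Type} (G : SimpleGraph V) (n : ℕ) : SubdivV G n → SubdivV G n → Prop
  | Sum.inl _, Sum.inl _ => False
  | Sum.inl a, Sum.inr q => ∃ p : SubdivPre G n, Quot.mk _ p = q ∧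
      ((p.u = a ∧ p.i = 1) ∨ (p.w = a ∧ p.i = n - 1))
  | Sum.inr q, Sum.inl a => ∃ p : SubdivPre G n, Quot.mk _ p = q ∧
      ((p.u = a ∧ p.i = 1) ∨ (p.w = a ∧ p.i = n - 1))
  | Sum.inr q, Sum.inr q' => ∃ p p' : SubdivPre G n, Quot.mk _ p = q ∧ Quot.mk _ p' = q' ∧
      p.u = p'.u ∧ p.w = p'.w ∧ (p.i + 1 = p'.i ∨ p'.i + 1 = p.i)

/-- The `n`-th subdivision `G^{1/n}` of `G`: every edge is replaced by a path of length `n`. -/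
def subdivision {V : Type} (G : SimpleGraph V) (n : ℕ) : SimpleGraph (SubdivV G n) where
  Adj x y := x ≠ y ∧ subdivAdj G n x y
  symm := by
    constructor
    rintro x y ⟨hne, h⟩
    refine ⟨hne.symm, ?_⟩
    match x, y, h with
    | Sum.inl a, Sum.inr q, h => exact h
    | Sum.inr q, Sum.inl a, h => exact h
    | Sum.inr q, Sum.inr q', ⟨p, p', h1, h2, h3, h4, h5⟩ =>
        exact ⟨p', p, h2, h1, h3.symm, h4.symm, h5.symm⟩
  loopless := ⟨fun x h => h.1 rfl⟩

/-- The `m`-th power of a graph: join vertices at distance at most `m`. -/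
def gpow {α : Type} (H : SimpleGraph α) (m : ℕ) : SimpleGraph α where
  Adj x y := x ≠ y ∧ H.Reachable x y ∧ H.dist x y ≤ m
  symm := by
    constructor
    rintro x y ⟨h1, h2, h3⟩
    exact ⟨h1.symm, h2.symm, by rwa [SimpleGraph.dist_comm]⟩
  loopless := ⟨fun x h => h.1 rfl⟩

/-- `G` has a total colouring with `m` colours: vertices and edges are coloured so that
adjacent vertices, incident edges, and an edge with either of its endpoints receive
distinct colours. -/
def TotalColorable {V : Type} (G : SimpleGraph V) (m : ℕ) : Prop :=
  ∃ (cV : V → Fin m) (cE : G.edgeSet → Fin m),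
    (∀ u v : V, G.Adj u v → cV u ≠ cV v) ∧
    (∀ e f : G.edgeSet, e ≠ f → (∃ v : V, v ∈ (e : Sym2 V) ∧ v ∈ (f : Sym2 V)) →
      cE e ≠ cE f) ∧
    (∀ (v : V) (e : G.edgeSet), v ∈ (e : Sym2 V) → cV v ≠ cE e)

/-- The total chromatic number of `G`. -/
noncomputable def totalChromaticNumber {V : Type} (G : SimpleGraph V) : ℕ∞ :=
  ⨅ m ∈ {m : ℕ | TotalColorable G m}, (m : ℕ∞)

section Aux
variable {V : Type} (G : SimpleGraph V)

lemma SubdivPre.i_eq_one (p : SubdivPre G 2) : p.i = 1 := le_antisymm p.hi2 p.hi1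

/-- The edge of `G` corresponding to an inner vertex of the 2nd subdivision. -/
def toEdge : SubdivInner G 2 → G.edgeSet :=
  Quot.lift (fun p => ⟨s(p.u, p.w), p.adj⟩)
    (by rintro p q ⟨h1, h2, _⟩; apply Subtype.ext; simp only [h1, h2]; exact Sym2.eq_swap)

lemma toEdge_mk (p : SubdivPre G 2) : toEdge G (Quot.mk _ p) = ⟨s(p.u, p.w), p.adj⟩ := rfl

lemma toEdge_inj : Function.Injective (toEdge G) := by
  intro q q' h
  induction q using Quot.ind with | _ p =>
  induction q' using Quot.ind with | _ p' =>
  rw [toEdge_mk, toEdge_mk, Subtype.ext_iff] at h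
  simp only [Sym2.eq_iff] at h
  rcases h with ⟨hu, hw⟩ | ⟨hu, hw⟩
  · have : p = p' := by
      cases p; cases p'
      simp only at hu hw
      subst hu; subst hw
      simp_all [SubdivPre.i_eq_one]
      omega
    rw [this]
  · exact Quot.sound ⟨hu, hw, by rw [p.i_eq_one, p'.i_eq_one]⟩

lemma toEdge_surj : Function.Surjective (toEdge G) := by
  rintro ⟨e, he⟩
  induction e using Sym2.inductionOn with
  | _ a b =>
    exact ⟨Quot.mk _ ⟨a, b, 1, he, le_refl 1, le_refl 1⟩, rfl⟩

lemma adj_inl_inr_iff (a : V) (q : SubdivInner G 2) :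
    (subdivision G 2).Adj (Sum.inl a) (Sum.inr q) ↔ a ∈ (toEdge G q : Sym2 V) := by
  constructor
  · rintro ⟨-, p, rfl, h⟩
    rw [toEdge_mk]
    rcases h with ⟨rfl, -⟩ | ⟨rfl, -⟩
    · exact Sym2.mem_mk_left _ _
    · exact Sym2.mem_mk_right _ _
  · intro h
    induction q using Quot.ind with | _ p =>
    rw [toEdge_mk] at h
    refine ⟨Sum.inl_ne_inr, p, rfl, ?_⟩
    rcases Sym2.mem_iff.1 h with rfl | rfl
    · exact Or.inl ⟨rfl, p.i_eq_one G⟩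
    · exact Or.inr ⟨rfl, p.i_eq_one G⟩

lemma not_adj_inl_inl (a b : V) : ¬ (subdivision G 2).Adj (Sum.inl a) (Sum.inl b) :=
  fun h => h.2

lemma not_adj_inr_inr (q q' : SubdivInner G 2) :
    ¬ (subdivision G 2).Adj (Sum.inr q) (Sum.inr q') := by
  rintro ⟨-, p, p', -, -, -, -, h⟩
  have h1 := p.i_eq_one G
  have h2 := p'.i_eq_one G
  omega

lemma reach2 {α : Type} {H : SimpleGraph α} {x y : α} (h : H.Reachable x y)
    (hd : H.dist x y ≤ 2) : x = y ∨ H.Adj x y ∨ ∃ z, H.Adj x z ∧ H.Adj z y := by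
  obtain ⟨w, hw⟩ := h.exists_walk_length_eq_dist
  have hlen : w.length ≤ 2 := hw ▸ hd
  cases w with
  | nil => exact Or.inl rfl
  | cons h1 w' =>
    cases w' with
    | nil => exact Or.inr (Or.inl h1)
    | cons h2 w'' =>
      cases w'' with
      | nil => exact Or.inr (Or.inr ⟨_, h1, h2⟩)
      | cons h3 _ => simp [SimpleGraph.Walk.length_cons] at hlen

lemma gpow_adj_of_adj {α : Type} {H : SimpleGraph α} {x y : α} (h : H.Adj x y) :
    (gpow H 2).Adj x y :=
  ⟨h.ne, h.reachable, le_trans (SimpleGraph.dist_le (SimpleGraph.Walk.cons h SimpleGraph.Walk.nil)) (by norm_num)⟩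

lemma gpow_adj_of_two {α : Type} {H : SimpleGraph α} {x y z : α} (hne : x ≠ y)
    (h1 : H.Adj x z) (h2 : H.Adj z y) : (gpow H 2).Adj x y :=
  ⟨hne, ⟨SimpleGraph.Walk.cons h1 (SimpleGraph.Walk.cons h2 SimpleGraph.Walk.nil)⟩,
    le_trans (SimpleGraph.dist_le (SimpleGraph.Walk.cons h1 (SimpleGraph.Walk.cons h2 SimpleGraph.Walk.nil))) (by simp)⟩

lemma total_iff_colorable (m : ℕ) :
    TotalColorable G m ↔ (gpow (subdivision G 2) 2).Colorable m := by
  constructor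
  · rintro ⟨cV, cE, h1, h2, h3⟩
    refine ⟨SimpleGraph.Coloring.mk
      (fun x => match x with
        | Sum.inl a => cV a
        | Sum.inr q => cE (toEdge G q)) ?_⟩
    rintro x y ⟨hne, hr, hd⟩
    rcases reach2 hr hd with rfl | hadj | ⟨z, hz1, hz2⟩
    · exact absurd rfl hne
    · match x, y with
      | Sum.inl a, Sum.inl b => exact absurd hadj (not_adj_inl_inl G a b)
      | Sum.inl a, Sum.inr q =>
        exact h3 a (toEdge G q) ((adj_inl_inr_iff G a q).1 hadj)
      | Sum.inr q, Sum.inl a =>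
        exact (h3 a (toEdge G q) ((adj_inl_inr_iff G a q).1 hadj.symm)).symm
      | Sum.inr q, Sum.inr q' => exact absurd hadj (not_adj_inr_inr G q q')
    · match x, y, z with
      | Sum.inl a, Sum.inl b, Sum.inl v => exact absurd hz1 (not_adj_inl_inl G a v)
      | Sum.inl a, Sum.inl b, Sum.inr q =>
        have ha := (adj_inl_inr_iff G a q).1 hz1
        have hb := (adj_inl_inr_iff G b q).1 hz2.symm
        have hab : a ≠ b := fun h => hne (by rw [h])
        have : (toEdge G q : Sym2 V) = s(a, b) := (Sym2.mem_and_mem_iff hab).1 ⟨ha, hb⟩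
        have hGab : G.Adj a b := by
          have h' := (toEdge G q).2
          rwa [this] at h'
        exact h1 a b hGab
      | Sum.inl a, Sum.inr q, Sum.inl v => exact absurd hz1 (not_adj_inl_inl G a v)
      | Sum.inl a, Sum.inr q, Sum.inr q' => exact absurd hz2 (not_adj_inr_inr G q' q)
      | Sum.inr q, Sum.inl a, Sum.inl v => exact absurd hz2 (not_adj_inl_inl G v a)
      | Sum.inr q, Sum.inl a, Sum.inr q' => exact absurd hz1 (not_adj_inr_inr G q q')
      | Sum.inr q, Sum.inr q', Sum.inr q'' => exact absurd hz1 (not_adj_inr_inr G q q'')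
      | Sum.inr q, Sum.inr q', Sum.inl v =>
        have hq : q ≠ q' := fun h => hne (by rw [h])
        have hv1 := (adj_inl_inr_iff G v q).1 hz1.symm
        have hv2 := (adj_inl_inr_iff G v q').1 hz2
        exact h2 (toEdge G q) (toEdge G q') (fun h => hq (toEdge_inj G h)) ⟨v, hv1, hv2⟩
  · rintro ⟨c⟩
    set eqv := Equiv.ofBijective (toEdge G) ⟨toEdge_inj G, toEdge_surj G⟩ with heqv
    have happ : ∀ e : G.edgeSet, toEdge G (eqv.symm e) = e := fun e => eqv.apply_symm_apply e
    refine ⟨fun a => c (Sum.inl a), fun e => c (Sum.inr (eqv.symm e)), ?_, ?_, ?_⟩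
    · intro a b hab
      apply c.valid
      refine gpow_adj_of_two (by simp [hab.ne]) (y := Sum.inl b)
        (z := Sum.inr (Quot.mk _ ⟨a, b, 1, hab, le_refl 1, le_refl 1⟩)) ?_ ?_
      · exact (adj_inl_inr_iff G a _).2 (by rw [toEdge_mk]; exact Sym2.mem_mk_left _ _)
      · exact ((adj_inl_inr_iff G b _).2 (by rw [toEdge_mk]; exact Sym2.mem_mk_right _ _)).symm
    · rintro e f hef ⟨v, hv1, hv2⟩
      apply c.valid
      have hqq : eqv.symm e ≠ eqv.symm f := fun h => hef (by simpa using congrArg eqv h)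
      refine gpow_adj_of_two (fun h => hqq (Sum.inr.inj h)) (z := Sum.inl v) ?_ ?_
      · exact ((adj_inl_inr_iff G v _).2 (by rw [happ]; exact hv1)).symm
      · exact (adj_inl_inr_iff G v _).2 (by rw [happ]; exact hv2)
    · intro v e hv
      apply c.valid
      apply gpow_adj_of_adj
      rw [adj_inl_inr_iff, happ]; exact hv

end Aux

theorem totalChromaticNumber_eq_chromaticNumber_G22 {V : Type} (G : SimpleGraph V) :
    totalChromaticNumber G = (gpow (subdivision G 2) 2).chromaticNumber := by
  have hset : {m : ℕ | TotalColorable G m} = setOf (gpow (subdivision G 2) 2).Colorable :=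
    Set.ext fun m => total_iff_colorable G m
  rw [totalChromaticNumber, SimpleGraph.chromaticNumber, hset]
  rfl
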